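/- For every integer n ≥ 2, (n-1)^(n-1) equals the sum over all tuples (k_1, ..., k_{n-2}) of nonnegative integers with k_1 + ... + k_j ≤ j for each j = 1, ..., n-2, of the product of binomial coefficients C(n, k_1)·C(n - k_1, k_2)·⋯·C(n - (k_1+⋯+k_{n-3}), k_{n-2}). -/

import Mathlib

open Finset Fintype

-- word count / parking numbers
def pw (m s : ℕ) : ℕ := if s = 0 then 1 else (m + 1 - s) * (m + 1) ^ (s - 1)

lemma pw_zero (m : ℕ) : pw m 0 = 1 := rfl

lemma pw_add (m s : ℕ) (hs : s ≤ m + 1) : pw m s + s * (m + 1) ^ (s - 1) = (m + 1) ^ s := by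
  cases s with
  | zero => simp [pw]
  | succ t =>
    simp only [pw, Nat.succ_ne_zero, if_false, Nat.add_sub_cancel]
    rw [← Nat.add_mul]
    rw [Nat.sub_add_cancel (by omega)]
    rw [pow_succ, Nat.mul_comm]

-- binomial theorem in ℕ
lemma binthm (N a : ℕ) : ∑ s ∈ Finset.range (N + 1), N.choose s * a ^ s = (a + 1) ^ N := by
  rw [add_pow]
  apply Finset.sum_congr rfl
  intro s hs
  push_cast
  ring

lemma binthm' (N a : ℕ) :
    ∑ s ∈ Finset.range (N + 1), N.choose s * (s * a ^ (s - 1)) = N * (a + 1) ^ (N - 1) := by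
  cases N with
  | zero => simp
  | succ M =>
    rw [Finset.sum_range_succ'] -- peel first term
    simp only [Nat.choose_zero_right, Nat.zero_mul, Nat.mul_zero, Nat.add_zero, Nat.mul_one]
    simp only [Nat.add_sub_cancel]
    have : ∀ s ∈ Finset.range (M + 1), (M+1).choose (s+1) * ((s+1) * a ^ s) =
        (M + 1) * (M.choose s * a ^ s) := by
      intro s hs
      have h := Nat.add_one_mul_choose_eq M s
      rw [show (M+1).choose (s+1) * ((s+1) * a ^ s) = ((M+1).choose (s+1) * (s+1)) * a ^ s by ring,
        ← h]
      ring
    rw [Finset.sum_congr rfl this, ← Finset.mul_sum, binthm]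

lemma pw_rec (m s : ℕ) (hs : s ≤ m + 1) :
    ∑ t ∈ Finset.range (s + 1), s.choose t * pw m t = pw (m + 1) s := by
  have h1 : ∑ t ∈ Finset.range (s+1), s.choose t * pw m t
      + ∑ t ∈ Finset.range (s+1), s.choose t * (t * (m+1)^(t-1)) = (m+2)^s := by
    rw [← Finset.sum_add_distrib]
    have he : ∀ t ∈ Finset.range (s+1), s.choose t * pw m t + s.choose t * (t*(m+1)^(t-1))
        = s.choose t * (m+1)^t := by
      intro t ht
      rw [← Nat.mul_add, pw_add m t (le_trans (Finset.mem_range_succ_iff.mp ht) hs)]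
    rw [Finset.sum_congr rfl he]
    have h := binthm s (m+1)
    rw [show (m+1+1) = m+2 by omega] at h
    exact h
  have h2 := binthm' s (m+1)
  have h3 := pw_add (m+1) s (by omega)
  have e : (m+1+1) = m + 2 := by omega
  rw [e] at h2 h3
  omega

lemma final_id (m : ℕ) :
    ∑ s ∈ Finset.range (m + 1), (m+2).choose s * pw m s = (m+1)^(m+1) := by
  have hz1 : pw m (m+1) = 0 := by simp [pw]
  have hext : ∑ s ∈ Finset.range (m+2), (m+2).choose s * pw m s
      = ∑ s ∈ Finset.range (m+1), (m+2).choose s * pw m s := by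
    rw [Finset.sum_range_succ, hz1]; simp
  have h1 : ∑ s ∈ Finset.range (m+2), (m+2).choose s * pw m s
      + ∑ s ∈ Finset.range (m+2), (m+2).choose s * (s * (m+1)^(s-1))
      = ∑ s ∈ Finset.range (m+2), (m+2).choose s * (m+1)^s := by
    rw [← Finset.sum_add_distrib]
    apply Finset.sum_congr rfl
    intro s hs
    rw [← Nat.mul_add, pw_add m s (Finset.mem_range_succ_iff.mp hs)]
  have h2 : ∑ s ∈ Finset.range (m+3), (m+2).choose s * (m+1)^s = (m+2)^(m+2) := by
    have h := binthm (m+2) (m+1)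
    rw [show (m+1+1) = m+2 by omega] at h
    exact h
  have h3 : ∑ s ∈ Finset.range (m+3), (m+2).choose s * (s * (m+1)^(s-1))
      = (m+2) * (m+2)^(m+1) := by
    have h := binthm' (m+2) (m+1)
    rw [show (m+1+1) = m+2 by omega, show (m+2-1) = m+1 by omega] at h
    exact h
  rw [Finset.sum_range_succ] at h2 h3
  simp only [Nat.choose_self, Nat.one_mul, Nat.add_sub_cancel] at h2 h3
  rw [show (m+2-1)=m+1 by omega] at h3
  have e1 : (m+1)^(m+2) = (m+1) * (m+1)^(m+1) := by ring
  have e2 : (m+2) * (m+1)^(m+1) = (m+1) * (m+1)^(m+1) + (m+1)^(m+1) := by ring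
  have e3 : (m+2) * (m+2)^(m+1) = (m+2)^(m+2) := by ring
  omega

lemma choose_trans (r s t : ℕ) (h : t ≤ s) :
    r.choose t * (r - t).choose (s - t) = r.choose s * s.choose t := by
  by_cases hs : s ≤ r
  · exact (Nat.choose_mul h).symm
  · have h1 : r.choose s = 0 := Nat.choose_eq_zero_of_lt (by omega)
    rw [h1, Nat.zero_mul]
    by_cases ht : t ≤ r
    · have h2 : (r - t).choose (s - t) = 0 := Nat.choose_eq_zero_of_lt (by omega)
      rw [h2, Nat.mul_zero]
    · have h3 : r.choose t = 0 := Nat.choose_eq_zero_of_lt (by omega)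
      rw [h3, Nat.zero_mul]

lemma filt_le (m : ℕ) (j : Fin m) :
    (Finset.univ.filter (· ≤ j.castSucc) : Finset (Fin (m+1)))
      = (Finset.univ.filter (· ≤ j)).image Fin.castSucc := by
  ext i
  simp only [Finset.mem_filter, Finset.mem_univ, true_and, Finset.mem_image, Fin.le_def,
    Fin.coe_castSucc]
  constructor
  · intro h
    exact ⟨⟨i.val, by omega⟩, by simpa using h, by simp [Fin.ext_iff]⟩
  · rintro ⟨a, ha, rfl⟩
    simpa using ha

lemma filt_lt (m : ℕ) (j : Fin m) :
    (Finset.univ.filter (· < j.castSucc) : Finset (Fin (m+1)))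
      = (Finset.univ.filter (· < j)).image Fin.castSucc := by
  ext i
  simp only [Finset.mem_filter, Finset.mem_univ, true_and, Finset.mem_image, Fin.lt_def,
    Fin.coe_castSucc]
  constructor
  · intro h
    exact ⟨⟨i.val, by omega⟩, by simpa using h, by simp [Fin.ext_iff]⟩
  · rintro ⟨a, ha, rfl⟩
    simpa using ha

lemma filt_lt_last (m : ℕ) :
    (Finset.univ.filter (· < Fin.last m) : Finset (Fin (m+1)))
      = Finset.univ.image Fin.castSucc := by
  ext i
  simp only [Finset.mem_filter, Finset.mem_univ, true_and, Finset.mem_image, Fin.lt_def,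
    Fin.val_last]
  constructor
  · intro h
    exact ⟨⟨i.val, by omega⟩, by simp [Fin.ext_iff]⟩
  · rintro ⟨a, rfl⟩
    simpa using a.isLt

lemma filt_le_last (m : ℕ) :
    (Finset.univ.filter (· ≤ Fin.last m) : Finset (Fin (m+1))) = Finset.univ := by
  ext i
  simp [Fin.le_def, Fin.val_last, Nat.lt_succ_iff.mp i.isLt]

lemma castSucc_injOn (m : ℕ) (s : Finset (Fin m)) :
    ∀ x ∈ s, ∀ y ∈ s, Fin.castSucc x = Fin.castSucc y → x = y :=
  fun x _ y _ h => Fin.castSucc_injective m h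

lemma sum_piFinset_snoc {M : Type*} [AddCommMonoid M] (m : ℕ) (B : Fin (m+1) → ℕ)
    (f : (Fin (m+1) → ℕ) → M) :
    ∑ k ∈ Fintype.piFinset (fun i => Finset.range (B i)), f k
      = ∑ x ∈ Finset.range (B (Fin.last m)),
          ∑ k ∈ Fintype.piFinset (fun i : Fin m => Finset.range (B i.castSucc)),
            f (Fin.snoc k x) := by
  rw [← Finset.sum_product (f := fun p => f (Fin.snoc p.2 p.1))]
  apply Finset.sum_nbij' (i := fun k => (k (Fin.last m), Fin.init k))
    (j := fun p => Fin.snoc p.2 p.1)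
  · intro k hk
    rw [Fintype.mem_piFinset] at hk
    rw [Finset.mem_product]
    exact ⟨hk _, by rw [Fintype.mem_piFinset]; intro i; exact hk _⟩
  · intro p hp
    rw [Finset.mem_product, Fintype.mem_piFinset] at hp
    rw [Fintype.mem_piFinset]
    intro i
    refine Fin.lastCases ?_ ?_ i
    · simpa [Fin.snoc_last] using hp.1
    · intro j
      simpa [Fin.snoc_castSucc] using hp.2 j
  · intro k _
    exact Fin.snoc_init_self k
  · intro p _
    simp [Fin.snoc_last, Fin.init_snoc]
  · intro k _
    rw [Fin.snoc_init_self]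

def A (m r s : ℕ) : ℕ :=
  ∑ k ∈ Fintype.piFinset (fun i : Fin m => Finset.range (i.val + 2)),
    if (∀ j : Fin m, (∑ i ∈ Finset.univ.filter (· ≤ j), k i) ≤ j.val + 1) ∧ (∑ i, k i) = s
    then ∏ j : Fin m, Nat.choose (r - ∑ i ∈ Finset.univ.filter (· < j), k i) (k j) else 0

lemma cond_snoc (m : ℕ) (k : Fin m → ℕ) (x : ℕ) :
    (∀ j : Fin (m+1),
        (∑ i ∈ Finset.univ.filter (· ≤ j), (Fin.snoc k x : Fin (m+1) → ℕ) i) ≤ j.val + 1)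
      ↔ ((∀ j : Fin m, (∑ i ∈ Finset.univ.filter (· ≤ j), k i) ≤ j.val + 1)
          ∧ (∑ i, k i) + x ≤ m + 1) := by
  rw [Fin.forall_fin_succ']
  apply and_congr
  · apply forall_congr'
    intro j
    rw [filt_le m j, Finset.sum_image (castSucc_injOn m _)]
    simp [Fin.snoc_castSucc]
  · rw [filt_le_last m, Fin.sum_univ_castSucc]
    simp [Fin.snoc_castSucc, Fin.snoc_last, Fin.val_last]

lemma prod_snoc (m r : ℕ) (k : Fin m → ℕ) (x : ℕ) :
    (∏ j : Fin (m+1),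
        Nat.choose (r - ∑ i ∈ Finset.univ.filter (· < j), (Fin.snoc k x : Fin (m+1) → ℕ) i)
          ((Fin.snoc k x : Fin (m+1) → ℕ) j))
      = (∏ j : Fin m, Nat.choose (r - ∑ i ∈ Finset.univ.filter (· < j), k i) (k j))
          * Nat.choose (r - ∑ i, k i) x := by
  rw [Fin.prod_univ_castSucc]
  congr 1
  · apply Finset.prod_congr rfl
    intro j _
    rw [filt_lt m j, Finset.sum_image (castSucc_injOn m _)]
    simp [Fin.snoc_castSucc]
  · rw [filt_lt_last m, Finset.sum_image (castSucc_injOn m _)]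
    simp [Fin.snoc_castSucc, Fin.snoc_last]

lemma sum_snoc (m : ℕ) (k : Fin m → ℕ) (x : ℕ) :
    (∑ i : Fin (m+1), (Fin.snoc k x : Fin (m+1) → ℕ) i) = (∑ i, k i) + x := by
  rw [Fin.sum_univ_castSucc]
  simp [Fin.snoc_castSucc, Fin.snoc_last]

lemma A_succ (m r s : ℕ) :
    A (m+1) r s = ∑ x ∈ Finset.range (m+2),
      if x ≤ s ∧ s ≤ m + 1 then Nat.choose (r - (s - x)) x * A m r (s - x) else 0 := by
  rw [A, sum_piFinset_snoc m (fun i => i.val + 2)]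
  have hfam : (fun i : Fin m => Finset.range ((Fin.castSucc i).val + 2))
      = fun i : Fin m => Finset.range (i.val + 2) := by
    funext i; simp
  rw [show ((Fin.last m).val + 2) = m + 2 by simp]
  rw [hfam]
  apply Finset.sum_congr rfl
  intro x hx
  by_cases hxs : x ≤ s ∧ s ≤ m + 1
  · rw [if_pos hxs, A, Finset.mul_sum]
    apply Finset.sum_congr rfl
    intro k _
    simp only [cond_snoc, prod_snoc, sum_snoc]
    by_cases hc : (∀ j : Fin m, (∑ i ∈ Finset.univ.filter (· ≤ j), k i) ≤ j.val + 1)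
    · by_cases ht : (∑ i, k i) = s - x
      · rw [if_pos ⟨⟨hc, by omega⟩, by omega⟩, if_pos ⟨hc, ht⟩, ht]
        ring
      · rw [if_neg (by push_neg; intro h; omega), if_neg (by push_neg; intro _; exact ht)]
        simp
    · rw [if_neg (by push_neg; intro h; exact absurd h.1 hc), if_neg (by push_neg; intro h; exact absurd h hc)]
      simp
  · rw [if_neg hxs]
    apply Finset.sum_eq_zero
    intro k _
    simp only [cond_snoc, prod_snoc, sum_snoc]
    rw [if_neg]
    rintro ⟨⟨-, h1⟩, h2⟩
    exact hxs ⟨by omega, by omega⟩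

lemma A_closed (m : ℕ) : ∀ r s : ℕ, A m r s = r.choose s * pw m s := by
  induction m with
  | zero =>
    intro r s
    rw [A]
    simp only [Finset.sum_const, Finset.univ_eq_empty]
    cases s with
    | zero => simp [pw]
    | succ t =>
      have : pw 0 (t+1) = 0 := by simp [pw]
      rw [this, Nat.mul_zero]
      simp
  | succ m ih =>
    intro r s
    rw [A_succ]
    by_cases hs : s ≤ m + 1
    · have hsub : Finset.range (s+1) ⊆ Finset.range (m+2) :=
        Finset.range_subset_range.mpr (by omega)
      have hzero : ∀ x ∈ Finset.range (m+2), x ∉ Finset.range (s+1) →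
          (if x ≤ s ∧ s ≤ m + 1 then Nat.choose (r - (s - x)) x * A m r (s - x) else 0) = 0 := by
        intro x hx hxs
        rw [if_neg]
        rintro ⟨h1, -⟩
        exact hxs (Finset.mem_range.mpr (by omega))
      rw [← Finset.sum_subset hsub hzero]
      have hstep : ∀ x ∈ Finset.range (s+1),
          (if x ≤ s ∧ s ≤ m + 1 then Nat.choose (r - (s - x)) x * A m r (s - x) else 0)
            = (fun t => Nat.choose (r - t) (s - t) * (r.choose t * pw m t)) (s - x) := by
        intro x hx
        have hxle : x ≤ s := Finset.mem_range_succ_iff.mp hx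
        rw [if_pos ⟨hxle, hs⟩, ih]
        simp only []
        rw [show s - (s - x) = x by omega]
      rw [Finset.sum_congr rfl hstep]
      have hr := Finset.sum_range_reflect (fun t => Nat.choose (r - t) (s - t) * (r.choose t * pw m t)) (s+1)
      simp only [Nat.add_sub_cancel] at hr
      simp only [] 
      rw [hr]
      have hterm : ∀ t ∈ Finset.range (s+1),
          Nat.choose (r - t) (s - t) * (r.choose t * pw m t)
            = r.choose s * (s.choose t * pw m t) := by
        intro t ht
        have h := choose_trans r s t (Finset.mem_range_succ_iff.mp ht)
        calc Nat.choose (r - t) (s - t) * (r.choose t * pw m t)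
            = (r.choose t * (r-t).choose (s-t)) * pw m t := by ring
          _ = (r.choose s * s.choose t) * pw m t := by rw [h]
          _ = r.choose s * (s.choose t * pw m t) := by ring
      rw [Finset.sum_congr rfl hterm, ← Finset.mul_sum, pw_rec m s hs]
    · have hz : pw (m+1) s = 0 := by
        simp only [pw]
        rw [if_neg (by omega)]
        rw [show m + 1 + 1 - s = 0 by omega, Nat.zero_mul]
      rw [hz, Nat.mul_zero]
      apply Finset.sum_eq_zero
      intro x _
      rw [if_neg (by rintro ⟨-, h⟩; omega)]

lemma total_le (m : ℕ) (k : Fin m → ℕ)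
    (h : ∀ j : Fin m, (∑ i ∈ Finset.univ.filter (· ≤ j), k i) ≤ j.val + 1) :
    (∑ i, k i) ≤ m := by
  cases m with
  | zero => simp
  | succ m' =>
    have h2 := h (Fin.last m')
    rw [filt_le_last] at h2
    simpa using h2

lemma sum_A (m r : ℕ) :
    ∑ s ∈ Finset.range (m+1), A m r s
      = ∑ k ∈ Fintype.piFinset (fun i : Fin m => Finset.range (i.val + 2)),
          if (∀ j : Fin m, (∑ i ∈ Finset.univ.filter (· ≤ j), k i) ≤ j.val + 1)
          then ∏ j : Fin m, Nat.choose (r - ∑ i ∈ Finset.univ.filter (· < j), k i) (k j)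
          else 0 := by
  simp only [A]
  rw [Finset.sum_comm]
  apply Finset.sum_congr rfl
  intro k _
  by_cases hc : (∀ j : Fin m, (∑ i ∈ Finset.univ.filter (· ≤ j), k i) ≤ j.val + 1)
  · rw [if_pos hc]
    have e1 : ∀ x ∈ Finset.range (m+1),
        (if (∀ j : Fin m, (∑ i ∈ Finset.univ.filter (· ≤ j), k i) ≤ j.val + 1) ∧ (∑ i, k i) = x
         then ∏ j : Fin m, Nat.choose (r - ∑ i ∈ Finset.univ.filter (· < j), k i) (k j) else 0)
          = (if (∑ i, k i) = x
         then ∏ j : Fin m, Nat.choose (r - ∑ i ∈ Finset.univ.filter (· < j), k i) (k j) else 0) := by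
      intro x _
      exact if_congr (and_iff_right hc) rfl rfl
    rw [Finset.sum_congr rfl e1, Finset.sum_ite_eq]
    rw [if_pos (Finset.mem_range.mpr (by have := total_le m k hc; omega))]
  · rw [if_neg hc]
    apply Finset.sum_eq_zero
    intro x _
    exact if_neg (fun h => hc h.1)

open Finset in
/-- `(n-1)^(n-1)` equals the sum, over tuples `(k_1, …, k_{n-2})` of nonnegative
integers whose partial sums satisfy `k_1 + ⋯ + k_j ≤ j`, of the products of
binomial coefficients `C(n, k_1) C(n-k_1, k_2) ⋯ C(n-(k_1+⋯+k_{n-3}), k_{n-2})`. -/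
theorem stmt4 (n : ℕ) (hn : 2 ≤ n) :
    (n - 1) ^ (n - 1) =
      ∑ k ∈ Finset.univ.filter (fun k : Fin (n - 2) → Fin n =>
          ∀ j : Fin (n - 2), (∑ i ∈ Finset.univ.filter (· ≤ j), (k i : ℕ)) ≤ j.val + 1),
        ∏ j : Fin (n - 2),
          Nat.choose (n - ∑ i ∈ Finset.univ.filter (· < j), (k i : ℕ)) (k j) := by
  obtain ⟨m, rfl⟩ : ∃ m, n = m + 2 := ⟨n - 2, by omega⟩
  have hm2 : m + 2 - 2 = m := by omega
  have hm1 : m + 2 - 1 = m + 1 := by omega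
  rw [hm1, Finset.sum_filter]
  -- step 1: replace Fin (m+2)-valued tuples by ℕ-valued tuples in piFinset of range (m+2)
  have step1 :
      (∑ k ∈ (Finset.univ : Finset (Fin (m + 2 - 2) → Fin (m+2))),
        if (∀ j : Fin (m + 2 - 2), (∑ i ∈ Finset.univ.filter (· ≤ j), (k i : ℕ)) ≤ j.val + 1)
        then ∏ j : Fin (m + 2 - 2),
          Nat.choose ((m+2) - ∑ i ∈ Finset.univ.filter (· < j), (k i : ℕ)) (k j) else 0)
      = ∑ g ∈ Fintype.piFinset (fun _ : Fin (m + 2 - 2) => Finset.range (m+2)),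
        if (∀ j : Fin (m + 2 - 2), (∑ i ∈ Finset.univ.filter (· ≤ j), g i) ≤ j.val + 1)
        then ∏ j : Fin (m + 2 - 2),
          Nat.choose ((m+2) - ∑ i ∈ Finset.univ.filter (· < j), g i) (g j) else 0 := by
    apply Finset.sum_nbij' (i := fun k => fun i => (k i : ℕ))
      (j := fun g => fun i => (⟨g i % (m+2), Nat.mod_lt _ (by omega)⟩ : Fin (m+2)))
    · intro k _
      rw [Fintype.mem_piFinset]
      intro i
      exact Finset.mem_range.mpr (k i).isLt
    · intro g _
      exact Finset.mem_univ _
    · intro k _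
      funext i
      ext
      simp [Nat.mod_eq_of_lt (k i).isLt]
    · intro g hg
      rw [Fintype.mem_piFinset] at hg
      funext i
      have := Finset.mem_range.mp (hg i)
      simp [Nat.mod_eq_of_lt this]
    · intro k _
      rfl
  rw [step1]
  clear step1 hn
  -- step 2: shrink to the dependent-bound piFinset
  have hsub : Fintype.piFinset (fun i : Fin (m + 2 - 2) => Finset.range (i.val + 2))
      ⊆ Fintype.piFinset (fun _ : Fin (m + 2 - 2) => Finset.range (m+2)) := by
    apply Fintype.piFinset_subset
    intro i
    apply Finset.range_subset_range.mpr
    have : i.val < m + 2 - 2 := i.isLt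
    omega
  have hvanish : ∀ g ∈ Fintype.piFinset (fun _ : Fin (m + 2 - 2) => Finset.range (m+2)),
      g ∉ Fintype.piFinset (fun i : Fin (m + 2 - 2) => Finset.range (i.val + 2)) →
      (if (∀ j : Fin (m + 2 - 2), (∑ i ∈ Finset.univ.filter (· ≤ j), g i) ≤ j.val + 1)
        then ∏ j : Fin (m + 2 - 2),
          Nat.choose ((m+2) - ∑ i ∈ Finset.univ.filter (· < j), g i) (g j) else 0) = 0 := by
    intro g _ hgn
    rw [if_neg]
    intro hcond
    apply hgn
    rw [Fintype.mem_piFinset]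
    intro i
    rw [Finset.mem_range]
    have h1 := hcond i
    have h2 : g i ≤ ∑ i' ∈ Finset.univ.filter (· ≤ i), g i' := by
      apply Finset.single_le_sum (fun _ _ => Nat.zero_le _)
      simp
    omega
  rw [← Finset.sum_subset hsub hvanish]
  rw [← sum_A (m + 2 - 2) (m+2)]
  have hA : ∀ s ∈ Finset.range (m + 2 - 2 + 1), A (m + 2 - 2) (m+2) s
      = (m+2).choose s * pw (m + 2 - 2) s := fun s _ => A_closed _ _ _
  rw [Finset.sum_congr rfl hA, hm2, final_id]
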